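/- Let σ² > 0 and θ > 0, set ν = max(0, σ² − θ), λ = 1/(2θ), and c = min(θ, σ²), and let V ~ N(0, ν) (the point mass at 0 when ν = 0). Then for every u ∈ ℝ, −λ c − ln E[ exp( −λ (u − V)² ) ] = ( min(θ, σ²) / (2θ) ) · ( u²/σ² − 1 ) + max( 0, (1/2) ln(σ²/θ) ). (Equation (30) of the paper: closed form for the per-letter d-tilted information of a Gaussian source component with variance σ² under squared-error distortion at water level θ.) -/

import Mathlib

open MeasureTheory ProbabilityTheory
open scoped NNReal ENNReal

lemma shifted_gaussian_integral (A m : ℝ) :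
    ∫ v : ℝ, Real.exp (-A * (v - m) ^ 2) = Real.sqrt (Real.pi / A) := by
  rw [show (∫ v : ℝ, Real.exp (-A * (v - m) ^ 2))
      = ∫ v : ℝ, Real.exp (-A * v ^ 2) from
    integral_sub_right_eq_self (fun v : ℝ => Real.exp (-A * v ^ 2)) m]
  exact integral_gaussian A


/-- Eq. (30): closed form for the per-letter d-tilted information of a Gaussian
source component with variance `s = σ² > 0` under squared error at water level
`θ > 0`, with `ν = max(0, s−θ)`, `λ = 1/(2θ)`, `c = min(θ,s)`, `V ~ N(0,ν)`. -/
theorem gaussian_d_tilted_information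
    (s θ : ℝ) (hs : 0 < s) (hθ : 0 < θ)
    (ν lam c : ℝ) (hν : ν = max 0 (s - θ)) (hlam : lam = 1 / (2 * θ))
    (hc : c = min θ s) :
    ∀ u : ℝ,
      -lam * c - Real.log (∫ v, Real.exp (-lam * (u - v) ^ 2)
          ∂(gaussianReal 0 ν.toNNReal)) =
        (min θ s / (2 * θ)) * (u ^ 2 / s - 1) + max 0 ((1 / 2) * Real.log (s / θ)) := by
  intro u
  rcases le_or_gt s θ with hsθ | hθs
  · -- ν = 0 case
    have hν0 : ν = 0 := by rw [hν, max_eq_left (by linarith)]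
    have hmin : min θ s = s := min_eq_right hsθ
    have hmax : max 0 ((1 / 2) * Real.log (s / θ)) = 0 := by
      refine max_eq_left ?_
      have : s / θ ≤ 1 := (div_le_one hθ).mpr hsθ
      have := Real.log_nonpos (by positivity) this
      linarith
    rw [hν0]
    simp only [Real.toNNReal_zero, gaussianReal_zero_var]
    rw [integral_dirac (fun v => Real.exp (-lam * (u - v) ^ 2)) 0, Real.log_exp]
    rw [hmin, hmax, hc, hmin, hlam]
    field_simp
    ring
  · -- ν = s - θ > 0 case
    have hν' : ν = s - θ := by rw [hν, max_eq_right (by linarith)]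
    have hν0 : 0 < ν := by linarith
    have hVne : ν.toNNReal ≠ 0 := by
      simp [Real.toNNReal_eq_zero, not_le, hν0]
    have hVcoe : ((ν.toNNReal : ℝ≥0) : ℝ) = ν := Real.coe_toNNReal ν hν0.le
    set A : ℝ := s / (2 * θ * ν) with hA
    have hApos : 0 < A := by positivity
    have hseq : s = θ + ν := by linarith
    -- compute the integral
    have hint : (∫ v, Real.exp (-lam * (u - v) ^ 2) ∂(gaussianReal 0 ν.toNNReal))
        = Real.sqrt (θ / s) * Real.exp (-u ^ 2 / (2 * s)) := by
      rw [gaussianReal_of_var_ne_zero 0 hVne]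
      have hpdf : (ProbabilityTheory.gaussianPDF 0 ν.toNNReal)
          = fun x => ((((gaussianPDFReal 0 ν.toNNReal x).toNNReal : ℝ≥0)) : ℝ≥0∞) := by
        funext x
        rw [gaussianPDF_def]
        rfl
      rw [hpdf, integral_withDensity_eq_integral_smul
        ((measurable_gaussianPDFReal 0 ν.toNNReal).real_toNNReal) _]
      have hptwise : ∀ v : ℝ, (gaussianPDFReal 0 ν.toNNReal v).toNNReal
            • Real.exp (-lam * (u - v) ^ 2)
          = ((Real.sqrt (2 * Real.pi * ν))⁻¹ * Real.exp (-u ^ 2 / (2 * s)))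
            * Real.exp (-A * (v - ν * u / s) ^ 2) := by
        intro v
        rw [NNReal.smul_def, smul_eq_mul, Real.coe_toNNReal _ (gaussianPDFReal_nonneg _ _ _)]
        rw [gaussianPDFReal]
        rw [hVcoe]
        simp only [mul_assoc, ← Real.exp_add]
        congr 2
        rw [hlam, hseq]
        have hθ' : θ ≠ 0 := hθ.ne'
        have hν'' : ν ≠ 0 := hν0.ne'
        have hs' : θ + ν ≠ 0 := by positivity
        rw [hA, hseq]
        field_simp [hA, hseq]
        ring
      rw [funext hptwise, integral_const_mul, shifted_gaussian_integral]
      have hπA : Real.pi / A = (θ / s) * (2 * Real.pi * ν) := by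
        rw [hA]
        field_simp
      rw [hπA, Real.sqrt_mul (by positivity)]
      have hsq : Real.sqrt (2 * Real.pi * ν) ≠ 0 := by positivity
      field_simp
      rw [← Real.sqrt_mul (by positivity : (0:ℝ) ≤ 2 * Real.pi),
        ← Real.sqrt_mul (by positivity : (0:ℝ) ≤ 2 * Real.pi * ν)]
      congr 1
      ring
    rw [hint]
    have hlog : Real.log (Real.sqrt (θ / s) * Real.exp (-u ^ 2 / (2 * s)))
        = (1 / 2) * Real.log (θ / s) + (-u ^ 2 / (2 * s)) := by
      rw [Real.log_mul (by positivity) (Real.exp_ne_zero _), Real.log_sqrt (by positivity),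
        Real.log_exp]
      ring
    rw [hlog]
    have hlogneg : Real.log (θ / s) = -Real.log (s / θ) := by
      rw [← Real.log_inv, inv_div]
    have hlognn : 0 ≤ Real.log (s / θ) :=
      Real.log_nonneg ((one_le_div hθ).mpr hθs.le)
    have hmax : max 0 ((1 / 2) * Real.log (s / θ)) = (1 / 2) * Real.log (s / θ) :=
      max_eq_right (by linarith)
    have hmin : min θ s = θ := min_eq_left hθs.le
    rw [hmax, hmin, hc, hmin, hlogneg, hlam]
    field_simp
    ring
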